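/- For each q ∈ ℝ, define F_q on the open set {(x¹,x²) ∈ ℝ² : x² > 0} by F_q(x¹,x²) = q((x¹)² + (x²)²)·arctan(x¹/x²) − (1/8)((x¹)² + (x²)²)·log((x¹)² + (x²)²). Then F_q satisfies the associativity equations with the identity metric η_{αβ} = δ_{αβ}: for all (x¹,x²) with x² > 0 and all α,β,γ,δ ∈ {1,2}, ∑_{λ=1}^2 (∂³F_q/∂x^α∂x^β∂x^λ)(∂³F_q/∂x^γ∂x^δ∂x^λ) = ∑_{λ=1}^2 (∂³F_q/∂x^γ∂x^β∂x^λ)(∂³F_q/∂x^α∂x^δ∂x^λ). -/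

import Mathlib

open scoped BigOperators

noncomputable section

/-- The pencil of prepotentials
`F_q(x¹,x²) = q((x¹)² + (x²)²) arctan(x¹/x²) − (1/8)((x¹)² + (x²)²) log((x¹)² + (x²)²)`. -/
def Fq (q : ℝ) (x : Fin 2 → ℝ) : ℝ :=
  q * ((x 0) ^ 2 + (x 1) ^ 2) * Real.arctan (x 0 / x 1)
    - (1 / 8) * ((x 0) ^ 2 + (x 1) ^ 2) * Real.log ((x 0) ^ 2 + (x 1) ^ 2)

/-- The standard basis vector `e_i` of `ℝ²`. -/
def e2 (i : Fin 2) : Fin 2 → ℝ := Pi.single i 1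

/-- Third partial derivative `∂³F/∂x^a∂x^b∂x^g` at `x`. -/
def d3 (F : (Fin 2 → ℝ) → ℝ) (x : Fin 2 → ℝ) (a b g : Fin 2) : ℝ :=
  iteratedFDeriv ℝ 3 F x ![e2 a, e2 b, e2 g]

namespace Stmt10Aux

abbrev E2 := Fin 2 → ℝ
def pr (i : Fin 2) : E2 →L[ℝ] ℝ := ContinuousLinearMap.proj i
def Lm (a b : ℝ) : E2 →L[ℝ] ℝ := a • pr 0 + b • pr 1
def M (i j : Fin 2) : E2 →L[ℝ] (E2 →L[ℝ] ℝ) := (pr i).smulRight (pr j)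

@[simp] lemma Lm_apply (a b : ℝ) (v : E2) : Lm a b v = a * v 0 + b * v 1 := by
  simp [Lm, pr, mul_comm]

@[simp] lemma M_apply (i j : Fin 2) (u v : E2) : M i j u v = u i * v j := by
  simp [M, pr, mul_comm]

/-- first partials -/
def P0 (q : ℝ) (z : E2) : ℝ :=
  2*q*(z 0)*Real.arctan (z 0 / z 1) + q*(z 1) - (z 0)/4 * (Real.log ((z 0)^2+(z 1)^2) + 1)
def P1 (q : ℝ) (z : E2) : ℝ :=
  2*q*(z 1)*Real.arctan (z 0 / z 1) - q*(z 0) - (z 1)/4 * (Real.log ((z 0)^2+(z 1)^2) + 1)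

/-- second partials -/
def Q00 (q : ℝ) (z : E2) : ℝ :=
  2*q*Real.arctan (z 0 / z 1) + 2*q*(z 0)*(z 1)/((z 0)^2+(z 1)^2)
    - (Real.log ((z 0)^2+(z 1)^2) + 1)/4 - (z 0)^2/(2*((z 0)^2+(z 1)^2))
def Q01 (q : ℝ) (z : E2) : ℝ :=
  q - 2*q*(z 0)^2/((z 0)^2+(z 1)^2) - (z 0)*(z 1)/(2*((z 0)^2+(z 1)^2))
def Q11 (q : ℝ) (z : E2) : ℝ :=
  2*q*Real.arctan (z 0 / z 1) - 2*q*(z 0)*(z 1)/((z 0)^2+(z 1)^2)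
    - (Real.log ((z 0)^2+(z 1)^2) + 1)/4 - (z 1)^2/(2*((z 0)^2+(z 1)^2))

/-- third partials -/
def A3 (q : ℝ) (z : E2) : ℝ :=
  4*q*(z 1)^3/((z 0)^2+(z 1)^2)^2 - (z 0)*((z 0)^2+3*(z 1)^2)/(2*((z 0)^2+(z 1)^2)^2)
def B3 (q : ℝ) (z : E2) : ℝ :=
  -(4*q*(z 0)*(z 1)^2/((z 0)^2+(z 1)^2)^2) + (z 1)*((z 0)^2-(z 1)^2)/(2*((z 0)^2+(z 1)^2)^2)
def C3 (q : ℝ) (z : E2) : ℝ :=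
  4*q*(z 0)^2*(z 1)/((z 0)^2+(z 1)^2)^2 + (z 0)*((z 1)^2-(z 0)^2)/(2*((z 0)^2+(z 1)^2)^2)
def D3 (q : ℝ) (z : E2) : ℝ :=
  -(4*q*(z 0)^3/((z 0)^2+(z 1)^2)^2) - (z 1)*(3*(z 0)^2+(z 1)^2)/(2*((z 0)^2+(z 1)^2)^2)

section pointwise
variable {q : ℝ} {z : E2}

lemma hSpos (hy : z 1 ≠ 0) : (0:ℝ) < (z 0)^2 + (z 1)^2 :=
  add_pos_of_nonneg_of_pos (sq_nonneg _) (by positivity)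

section atoms
variable (hy : z 1 ≠ 0)

lemma hx0 : HasFDerivAt (fun y : E2 => y 0) (pr 0) z := (pr 0).hasFDerivAt
lemma hx1 : HasFDerivAt (fun y : E2 => y 1) (pr 1) z := (pr 1).hasFDerivAt

lemma hasF1 (q : ℝ) (hy : z 1 ≠ 0) : HasFDerivAt (Fq q) (Lm (P0 q z) (P1 q z)) z := by
  have hS := ((hasDerivAt_pow 2 (z 0)).comp_hasFDerivAt z (hx0 (z := z))).add
    ((hasDerivAt_pow 2 (z 1)).comp_hasFDerivAt z hx1)
  have hinv : HasFDerivAt (fun y : E2 => (y 1)⁻¹) (-((z 1)^2)⁻¹ • pr 1) z :=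
    (hasDerivAt_inv hy).comp_hasFDerivAt z hx1
  have hθ := ((hx0 (z := z)).mul hinv).arctan
  have hlog := hS.log (ne_of_gt (hSpos hy))
  have h : HasFDerivAt (Fq q) _ z :=
    ((hS.const_mul q).mul hθ).sub ((hS.const_mul ((1:ℝ)/8)).mul hlog)
  refine h.congr_fderiv ?_
  ext v
  have hS0 : (z 0)^2 + (z 1)^2 ≠ 0 := ne_of_gt (hSpos hy)
  simp only [P0, P1, pr, Lm_apply, ContinuousLinearMap.add_apply, ContinuousLinearMap.coe_smul',
    ContinuousLinearMap.coe_sub', Pi.smul_apply, Pi.sub_apply, ContinuousLinearMap.proj_apply,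
    smul_eq_mul, Function.comp_apply, ContinuousLinearMap.neg_apply, Pi.add_apply,
    ContinuousLinearMap.coe_add', Pi.neg_apply, Pi.mul_apply]
  field_simp
  ring

lemma hasP0 (q : ℝ) (hy : z 1 ≠ 0) : HasFDerivAt (fun y : E2 => P0 q y) (Lm (Q00 q z) (Q01 q z)) z := by
  have hS := ((hasDerivAt_pow 2 (z 0)).comp_hasFDerivAt z (hx0 (z := z))).add
    ((hasDerivAt_pow 2 (z 1)).comp_hasFDerivAt z hx1)
  have hinv : HasFDerivAt (fun y : E2 => (y 1)⁻¹) (-((z 1)^2)⁻¹ • pr 1) z :=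
    (hasDerivAt_inv hy).comp_hasFDerivAt z hx1
  have hθ := ((hx0 (z := z)).mul hinv).arctan
  have hlog := hS.log (ne_of_gt (hSpos hy))
  have h : HasFDerivAt (fun y : E2 => P0 q y) _ z :=
    (((hx0 (z := z)).const_mul (2*q)).mul hθ |>.add ((hx1 (z := z)).const_mul q)).sub
      (((hx0 (z := z)).mul_const (4:ℝ)⁻¹).mul (hlog.add_const 1))
  refine h.congr_fderiv ?_
  ext v
  have hS0 : (z 0)^2 + (z 1)^2 ≠ 0 := ne_of_gt (hSpos hy)
  simp only [Q00, Q01, pr, Lm_apply, ContinuousLinearMap.add_apply, ContinuousLinearMap.coe_smul',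
    ContinuousLinearMap.coe_sub', Pi.smul_apply, Pi.sub_apply, ContinuousLinearMap.proj_apply,
    smul_eq_mul, Function.comp_apply, ContinuousLinearMap.neg_apply, Pi.add_apply,
    ContinuousLinearMap.coe_add', Pi.neg_apply, Pi.mul_apply]
  field_simp
  ring

lemma hasP1 (q : ℝ) (hy : z 1 ≠ 0) : HasFDerivAt (fun y : E2 => P1 q y) (Lm (Q01 q z) (Q11 q z)) z := by
  have hS := ((hasDerivAt_pow 2 (z 0)).comp_hasFDerivAt z (hx0 (z := z))).add
    ((hasDerivAt_pow 2 (z 1)).comp_hasFDerivAt z hx1)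
  have hinv : HasFDerivAt (fun y : E2 => (y 1)⁻¹) (-((z 1)^2)⁻¹ • pr 1) z :=
    (hasDerivAt_inv hy).comp_hasFDerivAt z hx1
  have hθ := ((hx0 (z := z)).mul hinv).arctan
  have hlog := hS.log (ne_of_gt (hSpos hy))
  have h : HasFDerivAt (fun y : E2 => P1 q y) _ z :=
    (((hx1 (z := z)).const_mul (2*q)).mul hθ |>.sub ((hx0 (z := z)).const_mul q)).sub
      (((hx1 (z := z)).mul_const (4:ℝ)⁻¹).mul (hlog.add_const 1))
  refine h.congr_fderiv ?_
  ext v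
  have hS0 : (z 0)^2 + (z 1)^2 ≠ 0 := ne_of_gt (hSpos hy)
  simp only [Q01, Q11, pr, Lm_apply, ContinuousLinearMap.add_apply, ContinuousLinearMap.coe_smul',
    ContinuousLinearMap.coe_sub', Pi.smul_apply, Pi.sub_apply, ContinuousLinearMap.proj_apply,
    smul_eq_mul, Function.comp_apply, ContinuousLinearMap.neg_apply, Pi.add_apply,
    ContinuousLinearMap.coe_add', Pi.neg_apply, Pi.mul_apply]
  field_simp
  ring

lemma hasQ00 (q : ℝ) (hy : z 1 ≠ 0) : HasFDerivAt (fun y : E2 => Q00 q y) (Lm (A3 q z) (B3 q z)) z := by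
  have hS := ((hasDerivAt_pow 2 (z 0)).comp_hasFDerivAt z (hx0 (z := z))).add
    ((hasDerivAt_pow 2 (z 1)).comp_hasFDerivAt z hx1)
  have hS0 : (z 0)^2 + (z 1)^2 ≠ 0 := ne_of_gt (hSpos hy)
  have hinv : HasFDerivAt (fun y : E2 => (y 1)⁻¹) (-((z 1)^2)⁻¹ • pr 1) z :=
    (hasDerivAt_inv hy).comp_hasFDerivAt z hx1
  have hθ := ((hx0 (z := z)).mul hinv).arctan
  have hlog := hS.log hS0
  have hSinv := (hasDerivAt_inv hS0).comp_hasFDerivAt z hS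
  have h2S0 : 2*((z 0)^2 + (z 1)^2) ≠ 0 := by positivity
  have h2Sinv := (hasDerivAt_inv h2S0).comp_hasFDerivAt z (hS.const_mul 2)
  have hx0sq := (hasDerivAt_pow 2 (z 0)).comp_hasFDerivAt z (hx0 (z := z))
  have h : HasFDerivAt (fun y : E2 => Q00 q y) _ z :=
    (((hθ.const_mul (2*q)).add ((((hx0 (z := z)).const_mul (2*q)).mul hx1).mul hSinv)).sub
      ((hlog.add_const 1).mul_const (4:ℝ)⁻¹)).sub (hx0sq.mul h2Sinv)
  refine h.congr_fderiv ?_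
  ext v
  simp only [A3, B3, pr, Lm_apply, ContinuousLinearMap.add_apply, ContinuousLinearMap.coe_smul',
    ContinuousLinearMap.coe_sub', Pi.smul_apply, Pi.sub_apply, ContinuousLinearMap.proj_apply,
    smul_eq_mul, Function.comp_apply, ContinuousLinearMap.neg_apply, Pi.add_apply,
    ContinuousLinearMap.coe_add', Pi.neg_apply, Pi.mul_apply]
  field_simp
  ring

lemma hasQ01 (q : ℝ) (hy : z 1 ≠ 0) : HasFDerivAt (fun y : E2 => Q01 q y) (Lm (B3 q z) (C3 q z)) z := by
  have hS := ((hasDerivAt_pow 2 (z 0)).comp_hasFDerivAt z (hx0 (z := z))).add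
    ((hasDerivAt_pow 2 (z 1)).comp_hasFDerivAt z hx1)
  have hS0 : (z 0)^2 + (z 1)^2 ≠ 0 := ne_of_gt (hSpos hy)
  have hSinv := (hasDerivAt_inv hS0).comp_hasFDerivAt z hS
  have h2S0 : 2*((z 0)^2 + (z 1)^2) ≠ 0 := by positivity
  have h2Sinv := (hasDerivAt_inv h2S0).comp_hasFDerivAt z (hS.const_mul 2)
  have hx0sq := (hasDerivAt_pow 2 (z 0)).comp_hasFDerivAt z (hx0 (z := z))
  have h : HasFDerivAt (fun y : E2 => Q01 q y) _ z :=
    ((hasFDerivAt_const q z).sub ((hx0sq.const_mul (2*q)).mul hSinv)).sub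
      (((hx0 (z := z)).mul hx1).mul h2Sinv)
  refine h.congr_fderiv ?_
  ext v
  simp only [B3, C3, pr, Lm_apply, ContinuousLinearMap.add_apply, ContinuousLinearMap.coe_smul',
    ContinuousLinearMap.coe_sub', Pi.smul_apply, Pi.sub_apply, ContinuousLinearMap.proj_apply,
    smul_eq_mul, Function.comp_apply, ContinuousLinearMap.neg_apply, Pi.add_apply,
    ContinuousLinearMap.coe_add', Pi.neg_apply, Pi.mul_apply, ContinuousLinearMap.zero_apply, Pi.zero_apply]
  field_simp
  ring

lemma hasQ11 (q : ℝ) (hy : z 1 ≠ 0) : HasFDerivAt (fun y : E2 => Q11 q y) (Lm (C3 q z) (D3 q z)) z := by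
  have hS := ((hasDerivAt_pow 2 (z 0)).comp_hasFDerivAt z (hx0 (z := z))).add
    ((hasDerivAt_pow 2 (z 1)).comp_hasFDerivAt z hx1)
  have hS0 : (z 0)^2 + (z 1)^2 ≠ 0 := ne_of_gt (hSpos hy)
  have hinv : HasFDerivAt (fun y : E2 => (y 1)⁻¹) (-((z 1)^2)⁻¹ • pr 1) z :=
    (hasDerivAt_inv hy).comp_hasFDerivAt z hx1
  have hθ := ((hx0 (z := z)).mul hinv).arctan
  have hlog := hS.log hS0
  have hSinv := (hasDerivAt_inv hS0).comp_hasFDerivAt z hS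
  have h2S0 : 2*((z 0)^2 + (z 1)^2) ≠ 0 := by positivity
  have h2Sinv := (hasDerivAt_inv h2S0).comp_hasFDerivAt z (hS.const_mul 2)
  have hx1sq := (hasDerivAt_pow 2 (z 1)).comp_hasFDerivAt z (hx1 (z := z))
  have h : HasFDerivAt (fun y : E2 => Q11 q y) _ z :=
    (((hθ.const_mul (2*q)).sub ((((hx0 (z := z)).const_mul (2*q)).mul hx1).mul hSinv)).sub
      ((hlog.add_const 1).mul_const (4:ℝ)⁻¹)).sub (hx1sq.mul h2Sinv)
  refine h.congr_fderiv ?_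
  ext v
  simp only [C3, D3, pr, Lm_apply, ContinuousLinearMap.add_apply, ContinuousLinearMap.coe_smul',
    ContinuousLinearMap.coe_sub', Pi.smul_apply, Pi.sub_apply, ContinuousLinearMap.proj_apply,
    smul_eq_mul, Function.comp_apply, ContinuousLinearMap.neg_apply, Pi.add_apply,
    ContinuousLinearMap.coe_add', Pi.neg_apply, Pi.mul_apply]
  field_simp
  ring

end atoms
end pointwise

end Stmt10Aux

namespace Stmt10Aux

@[simp] lemma e2_00 : e2 0 0 = 1 := by simp [e2]
@[simp] lemma e2_01 : e2 0 1 = 0 := by simp [e2]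
@[simp] lemma e2_10 : e2 1 0 = 0 := by simp [e2]
@[simp] lemma e2_11 : e2 1 1 = 1 := by simp [e2]

section layers
variable (q : ℝ)

def G1 (q : ℝ) : E2 → (E2 →L[ℝ] ℝ) := fun z => Lm (P0 q z) (P1 q z)
def G2 (q : ℝ) : E2 → (E2 →L[ℝ] (E2 →L[ℝ] ℝ)) := fun z =>
  Q00 q z • M 0 0 + Q01 q z • M 1 0 + Q01 q z • M 0 1 + Q11 q z • M 1 1

variable {z : E2}

lemma hasG1 (hy : z 1 ≠ 0) : HasFDerivAt (G1 q) (G2 q z) z := by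
  have h : HasFDerivAt (G1 q) _ z :=
    ((hasP0 q hy).smul_const (pr 0)).add ((hasP1 q hy).smul_const (pr 1))
  refine h.congr_fderiv ?_
  ext u v
  simp only [G2, M_apply, Lm, pr, ContinuousLinearMap.add_apply, ContinuousLinearMap.smul_apply,
    ContinuousLinearMap.smulRight_apply, ContinuousLinearMap.proj_apply, smul_eq_mul,
    Lm_apply]
  ring

end layers

def cf (q : ℝ) (x : E2) (a b g : Fin 2) : ℝ :=
  if a = 0 then
    (if b = 0 then (if g = 0 then A3 q x else B3 q x)
     else (if g = 0 then B3 q x else C3 q x))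
  else
    (if b = 0 then (if g = 0 then B3 q x else C3 q x)
     else (if g = 0 then C3 q x else D3 q x))

lemma d3_val (q : ℝ) {x : E2} (hx : 0 < x 1) (a b g : Fin 2) :
    d3 (Fq q) x a b g = cf q x a b g := by
  have hx' : x 1 ≠ 0 := ne_of_gt hx
  haveI : IsBoundedSMul ℝ (E2 →L[ℝ] E2 →L[ℝ] ℝ) :=
    NormedSpace.toIsBoundedSMul (𝕜 := ℝ) (E := E2 →L[ℝ] E2 →L[ℝ] ℝ)
  have hG2 : HasFDerivAt (G2 q) _ x :=
    ((((hasQ00 q hx').smul_const (M 0 0)).add ((hasQ01 q hx').smul_const (M 1 0))).add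
      ((hasQ01 q hx').smul_const (M 0 1))).add ((hasQ11 q hx').smul_const (M 1 1))
  have hs_open : IsOpen {y : E2 | 0 < y 1} := isOpen_lt continuous_const (continuous_apply 1)
  have h2 : ∀ y ∈ {y : E2 | 0 < y 1}, fderiv ℝ (fderiv ℝ (Fq q)) y = G2 q y := by
    intro y hy
    have h1 : fderiv ℝ (Fq q) =ᶠ[nhds y] G1 q :=
      Filter.eventuallyEq_of_mem (hs_open.mem_nhds hy)
        (fun w hw => (hasF1 q (ne_of_gt hw)).fderiv)
    rw [h1.fderiv_eq, (hasG1 q (ne_of_gt hy)).fderiv]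
  have hee2 : fderiv ℝ (fderiv ℝ (Fq q)) =ᶠ[nhds x] G2 q :=
    Filter.eventuallyEq_of_mem (hs_open.mem_nhds hx) h2
  have h3 := hee2.fderiv_eq.trans hG2.fderiv
  have hini : Fin.init ![e2 a, e2 b, e2 g] = ![e2 a, e2 b] := by
    funext i; fin_cases i <;> rfl
  have h1 : d3 (Fq q) x a b g = iteratedFDeriv ℝ 2 (fderiv ℝ (Fq q)) x
      (Fin.init ![e2 a, e2 b, e2 g]) (![e2 a, e2 b, e2 g] (Fin.last 2)) :=
    iteratedFDeriv_succ_apply_right _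
  rw [h1, hini, iteratedFDeriv_two_apply]
  show fderiv ℝ (fderiv ℝ (fderiv ℝ (Fq q))) x (e2 a) (e2 b) (e2 g) = _
  rw [h3]
  fin_cases a <;> fin_cases b <;> fin_cases g <;>
    simp [cf, ContinuousLinearMap.add_apply, ContinuousLinearMap.smul_apply,
      ContinuousLinearMap.smulRight_apply, M_apply, Lm_apply, smul_eq_mul]

lemma key (q : ℝ) {x : E2} (hx : 0 < x 1) :
    A3 q x * C3 q x + B3 q x * D3 q x = B3 q x * B3 q x + C3 q x * C3 q x := by
  have hS0 : (x 0)^2 + (x 1)^2 ≠ 0 := ne_of_gt (hSpos (ne_of_gt hx))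
  simp only [A3, B3, C3, D3]
  field_simp
  ring

end Stmt10Aux

open Stmt10Aux

/-- for each `q ∈ ℝ`, the prepotential `F_q` satisfies the associativity
equations with the identity metric `η_{αβ} = δ_{αβ}` on the half-plane `{x² > 0}`. -/
theorem stmt10 (q : ℝ) :
    ∀ x : Fin 2 → ℝ, 0 < x 1 →
      ∀ α β γ δ : Fin 2,
        ∑ l, d3 (Fq q) x α β l * d3 (Fq q) x γ δ l
          = ∑ l, d3 (Fq q) x γ β l * d3 (Fq q) x α δ l := by
  intro x hx α β γ δ
  have hkey := key q hx
  simp only [Fin.sum_univ_two, d3_val q hx]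
  fin_cases α <;> fin_cases β <;> fin_cases γ <;> fin_cases δ <;>
    norm_num [cf] <;>
    first
      | ring1
      | linear_combination hkey
      | linear_combination -hkey

end
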